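/- EnKF matrix identity (iii): with H, Q, R, S, K, Σ as in the context, det Σ · det S = det Q · det R; in particular, Σ is symmetric positive definite. -/

import Mathlib

open Matrix

lemma conjT_real {n m : Type*} (B : Matrix n m ℝ) : Bᴴ = Bᵀ := by
  ext i j; simp [conjTranspose_apply]

lemma posDef_congr {n : Type*} [Fintype n] [DecidableEq n] {A B : Matrix n n ℝ}
    (hA : A.PosDef) (hB : IsUnit B) : (B * A * Bᵀ).PosDef := by
  have hBt : Bᴴ = Bᵀ := conjT_real B
  refine PosDef.of_dotProduct_mulVec_pos ?_ ?_
  · have := isHermitian_conjTranspose_mul_mul Bᴴ hA.isHermitian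
    rw [conjTranspose_conjTranspose, hBt] at this
    exact this
  · intro x hx
    have hxt : Bᵀ *ᵥ x ≠ 0 := by
      have hu : IsUnit Bᵀ := by
        rw [isUnit_iff_isUnit_det, det_transpose, ← isUnit_iff_isUnit_det]; exact hB
      exact (mulVec_injective_iff_isUnit.2 hu).ne_iff' (by simp) |>.2 hx
    have := hA.dotProduct_mulVec_pos hxt
    rw [← hBt]
    simpa only [star_mulVec, dotProduct_mulVec, vecMul_vecMul, hBt, conjT_real, transpose_transpose] using this

/-- EnKF matrix identity (iii): with `S = H·Q·Hᵀ + R`,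
`K = Q·Hᵀ·S⁻¹` and `Σ = (I − K·H)·Q·(I − K·H)ᵀ + K·R·Kᵀ`, one has
`det Σ · det S = det Q · det R`; in particular `Σ` is symmetric positive
definite. -/
theorem enkf_matrix_identity_iii
    {d m : ℕ} (hd : 1 ≤ d) (hm : 1 ≤ m)
    (H : Matrix (Fin m) (Fin d) ℝ)
    (Q : Matrix (Fin d) (Fin d) ℝ) (R : Matrix (Fin m) (Fin m) ℝ)
    (hQ : Q.PosDef) (hR : R.PosDef)
    (S : Matrix (Fin m) (Fin m) ℝ) (hS : S = H * Q * Hᵀ + R)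
    (K : Matrix (Fin d) (Fin m) ℝ) (hK : K = Q * Hᵀ * S⁻¹)
    (Sig : Matrix (Fin d) (Fin d) ℝ)
    (hSig : Sig = (1 - K * H) * Q * (1 - K * H)ᵀ + K * R * Kᵀ) :
    Sig.det * S.det = Q.det * R.det ∧ Sig.PosDef := by
  have hSpd : S.PosDef := by
    rw [hS]
    have h1 : (H * Q * Hᴴ).PosSemidef := hQ.posSemidef.mul_mul_conjTranspose_same H
    rw [conjT_real] at h1
    exact Matrix.PosDef.posSemidef_add h1 hR
  have hSu : IsUnit S.det := hSpd.det_pos.ne'.isUnit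
  have hKS : K * S = Q * Hᵀ := by
    rw [hK, Matrix.mul_assoc, nonsing_inv_mul S hSu, Matrix.mul_one]
  -- Σ = (1 - K H) Q
  have h1 : Sig = Q - K * H * Q - Q * Hᵀ * Kᵀ + K * S * Kᵀ := by
    rw [hSig, hS, transpose_sub, transpose_one, transpose_mul]
    simp only [Matrix.sub_mul, Matrix.mul_sub, Matrix.add_mul, Matrix.mul_add,
      Matrix.mul_one, Matrix.one_mul, Matrix.mul_assoc]
    abel
  rw [hKS] at h1
  have hSig2 : Sig = (1 - K * H) * Q := by rw [h1]; noncomm_ring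
  -- determinant of 1 - K H
  have hdet1 : (1 - K * H).det = (1 - H * K).det := by
    have := Matrix.det_one_add_mul_comm (-K) H
    simpa [neg_mul, ← sub_eq_add_neg] using this
  have hRS : (1 - H * K) * S = R := by
    rw [sub_mul, one_mul, Matrix.mul_assoc, hKS, hS]
    rw [Matrix.mul_assoc]
    abel
  have hdet2 : (1 - H * K).det * S.det = R.det := by
    rw [← det_mul, hRS]
  have hdet : Sig.det * S.det = Q.det * R.det := by
    rw [hSig2, det_mul, hdet1, ← hdet2]; ring
  refine ⟨hdet, ?_⟩
  have hdetne : (1 - K * H).det ≠ 0 := by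
    intro h
    rw [hSig2, det_mul, h, zero_mul, zero_mul] at hdet
    exact (mul_pos hQ.det_pos hR.det_pos).ne' hdet.symm
  have hU : IsUnit (1 - K * H) := (isUnit_iff_isUnit_det _).2 hdetne.isUnit
  have hfirst : ((1 - K * H) * Q * (1 - K * H)ᵀ).PosDef := posDef_congr hQ hU
  have hsecond : (K * R * Kᵀ).PosSemidef := by
    have := hR.posSemidef.mul_mul_conjTranspose_same K
    rwa [conjT_real] at this
  rw [hSig]
  exact hfirst.add_posSemidef hsecond
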